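/- Let f_1, ..., f_m : ℝ^n → ℝ be differentiable with L-Lipschitz gradients (L > 0). Let x ∈ ℝ^n and suppose d* ∈ ℝ^n satisfies max_{i ∈ [m]} ⟨∇f_i(x), d*⟩ + (1/2)‖d*‖₂² ≤ 0. Let u ∈ ℝ^n, α > 0, and x' = x + α u. Then for every j ∈ [m]: f_j(x') ≤ f_j(x) − (α/2)‖d*‖₂² + L α² ‖d*‖₂² + L α² ‖u − d*‖₂² + α · max_{i ∈ [m]} ⟨∇f_i(x), u − d*⟩. -/

import Mathlib

open scoped RealInnerProductSpace

lemma descent_lemma_aux {F : Type*} [NormedAddCommGroup F] [InnerProductSpace ℝ F] [CompleteSpace F]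
    (f : F → ℝ) (hf : Differentiable ℝ f) {L : ℝ} (hL : 0 ≤ L)
    (hlip : ∀ a b, ‖gradient f a - gradient f b‖ ≤ L * ‖a - b‖)
    (x v : F) : f (x + v) ≤ f x + ⟪gradient f x, v⟫ + L / 2 * ‖v‖ ^ 2 := by
  have hgradcont : Continuous (gradient f) := by
    refine (LipschitzWith.of_dist_le_mul (K := L.toNNReal) (f := gradient f) ?_).continuous
    intro a b
    rw [dist_eq_norm, dist_eq_norm]
    calc ‖gradient f a - gradient f b‖ ≤ L * ‖a - b‖ := hlip a b
      _ ≤ L.toNNReal * ‖a - b‖ := by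
          gcongr; exact Real.le_coe_toNNReal L
  set g' : ℝ → ℝ := fun t => ⟪gradient f (x + t • v), v⟫ with hg'
  have hder : ∀ t : ℝ, HasDerivAt (fun s : ℝ => f (x + s • v)) (g' t) t := by
    intro t
    have h1 := hasGradientAt_iff_hasFDerivAt.mp (hf (x + t • v)).hasGradientAt
    have h2 : HasDerivAt (fun s : ℝ => x + s • v) v t := by
      simpa using ((hasDerivAt_id t).smul_const v).const_add x
    have := h1.comp_hasDerivAt t h2
    simpa [hg', Function.comp_def] using this
  have hcont : Continuous g' := by
    exact (hgradcont.comp (by continuity)).inner continuous_const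
  have hint : IntervalIntegrable g' MeasureTheory.volume 0 1 :=
    hcont.intervalIntegrable 0 1
  have key : ∫ t in (0:ℝ)..1, g' t = f (x + v) - f x := by
    have := intervalIntegral.integral_eq_sub_of_hasDerivAt
      (f := fun s : ℝ => f (x + s • v)) (f' := g') (a := 0) (b := 1)
      (fun t _ => hder t) hint
    simpa using this
  have hbound : ∀ t ∈ Set.Icc (0:ℝ) 1, g' t ≤ g' 0 + (L * ‖v‖ ^ 2) * t := by
    intro t ht
    have h1 : g' t - g' 0 = ⟪gradient f (x + t • v) - gradient f x, v⟫ := by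
      simp [hg', inner_sub_left]
    have h2 : ⟪gradient f (x + t • v) - gradient f x, v⟫ ≤
        ‖gradient f (x + t • v) - gradient f x‖ * ‖v‖ := real_inner_le_norm _ _
    have h3 : ‖gradient f (x + t • v) - gradient f x‖ ≤ L * (t * ‖v‖) := by
      have := hlip (x + t • v) x
      simpa [norm_smul, abs_of_nonneg ht.1] using this
    nlinarith [norm_nonneg v, mul_le_mul_of_nonneg_right h3 (norm_nonneg v)]
  have hmono : ∫ t in (0:ℝ)..1, g' t ≤ ∫ t in (0:ℝ)..1, (g' 0 + (L * ‖v‖ ^ 2) * t) := by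
    apply intervalIntegral.integral_mono_on zero_le_one hint
    · exact ((continuous_const.add (continuous_const.mul continuous_id)).intervalIntegrable 0 1)
    · exact hbound
  have hval : ∫ t in (0:ℝ)..1, (g' 0 + (L * ‖v‖ ^ 2) * t) = g' 0 + L / 2 * ‖v‖ ^ 2 := by
    rw [intervalIntegral.integral_add (f := fun _ => g' 0) (g := fun t => L * ‖v‖ ^ 2 * t) (intervalIntegrable_const)
      ((continuous_const.mul continuous_id').intervalIntegrable 0 1)]
    rw [intervalIntegral.integral_const_mul, integral_id]
    simp only [intervalIntegral.integral_const, smul_eq_mul]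
    ring
  have : f (x + v) - f x ≤ g' 0 + L / 2 * ‖v‖ ^ 2 := by
    rw [← key]; rw [hval] at hmono; exact hmono
  have hg0 : g' 0 = ⟪gradient f x, v⟫ := by simp [hg']
  linarith [this, hg0.le, hg0.ge]

/-- One-step descent inequality: if the objectives have `L`-Lipschitz gradients, `d*`
satisfies `max_i ⟨∇f_i(x), d*⟩ + (1/2)‖d*‖² ≤ 0`, and `x' = x + α u`, then for every `j`,
`f j x' ≤ f j x - (α/2)‖d*‖² + Lα²‖d*‖² + Lα²‖u - d*‖² + α max_i ⟨∇f_i(x), u - d*⟩`. -/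
theorem descent_step_inequality
    {n m : ℕ} (hm : 1 ≤ m)
    (f : Fin m → EuclideanSpace ℝ (Fin n) → ℝ)
    (hf : ∀ i, Differentiable ℝ (f i))
    (L : ℝ) (hL : 0 < L)
    (hlip : ∀ (i : Fin m) (x y : EuclideanSpace ℝ (Fin n)),
      ‖gradient (f i) x - gradient (f i) y‖ ≤ L * ‖x - y‖)
    (x dstar u : EuclideanSpace ℝ (Fin n)) (α : ℝ) (hα : 0 < α)
    (hdstar : Finset.univ.sup'
        (Finset.univ_nonempty_iff.mpr (Fin.pos_iff_nonempty.mp (by omega)))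
        (fun i => ⟪gradient (f i) x, dstar⟫) + (1 / 2) * ‖dstar‖ ^ 2 ≤ 0)
    (x' : EuclideanSpace ℝ (Fin n)) (hx' : x' = x + α • u) :
    ∀ j : Fin m,
      f j x' ≤ f j x - (α / 2) * ‖dstar‖ ^ 2 + L * α ^ 2 * ‖dstar‖ ^ 2
        + L * α ^ 2 * ‖u - dstar‖ ^ 2
        + α * Finset.univ.sup'
            (Finset.univ_nonempty_iff.mpr (Fin.pos_iff_nonempty.mp (by omega)))
            (fun i => ⟪gradient (f i) x, u - dstar⟫) := by
  intro j
  subst hx'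
  set g := gradient (f j) x with hg
  set S1 := Finset.univ.sup'
      (Finset.univ_nonempty_iff.mpr (Fin.pos_iff_nonempty.mp (by omega)))
      (fun i => ⟪gradient (f i) x, dstar⟫) with hS1def
  set S2 := Finset.univ.sup'
      (Finset.univ_nonempty_iff.mpr (Fin.pos_iff_nonempty.mp (by omega)))
      (fun i => ⟪gradient (f i) x, u - dstar⟫) with hS2def
  have hd := descent_lemma_aux (f j) (hf j) hL.le (hlip j) x (α • u)
  have h1 : ⟪g, α • u⟫ = α * ⟪g, dstar⟫ + α * ⟪g, u - dstar⟫ := by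
    rw [real_inner_smul_right, ← mul_add, ← inner_add_right]
    norm_num
  have hnorm : ‖α • u‖ ^ 2 = α ^ 2 * ‖u‖ ^ 2 := by
    rw [norm_smul]
    simp [mul_pow, sq_abs]
  rw [h1, hnorm] at hd
  have hj1 : ⟪g, dstar⟫ ≤ S1 := by
    rw [hS1def, hg]
    exact Finset.le_sup' (fun i => ⟪gradient (f i) x, dstar⟫) (Finset.mem_univ j)
  have hj2 : ⟪g, u - dstar⟫ ≤ S2 := by
    rw [hS2def, hg]
    exact Finset.le_sup' (fun i => ⟪gradient (f i) x, u - dstar⟫) (Finset.mem_univ j)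
  have hS1 : S1 ≤ -(1 / 2) * ‖dstar‖ ^ 2 := by linarith
  have A : α * ⟪g, dstar⟫ ≤ α * (-(1 / 2) * ‖dstar‖ ^ 2) :=
    mul_le_mul_of_nonneg_left (hj1.trans hS1) hα.le
  have B : α * ⟪g, u - dstar⟫ ≤ α * S2 := mul_le_mul_of_nonneg_left hj2 hα.le
  have hu : ‖u‖ ≤ ‖dstar‖ + ‖u - dstar‖ := by
    simpa using norm_add_le dstar (u - dstar)
  have C : ‖u‖ ^ 2 ≤ 2 * ‖dstar‖ ^ 2 + 2 * ‖u - dstar‖ ^ 2 := by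
    nlinarith [mul_self_le_mul_self (norm_nonneg u) hu, sq_nonneg (‖dstar‖ - ‖u - dstar‖)]
  have D : L / 2 * (α ^ 2 * ‖u‖ ^ 2) ≤ L * α ^ 2 * ‖dstar‖ ^ 2 + L * α ^ 2 * ‖u - dstar‖ ^ 2 := by
    nlinarith [mul_le_mul_of_nonneg_left C (by positivity : (0:ℝ) ≤ L / 2 * α ^ 2)]
  linarith
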